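/- Let H be a real Hilbert space, F : H → ℝ Fréchet differentiable and m-strongly convex in the first-order sense (F(y) ≥ F(x) + ⟨∇F(x), y − x⟩ + (m/2)‖y − x‖² for all x, y, with m > 0), τ > 0, and u : ℝ^p → H any map. Fix w̃ with v := u(w̃) and r > 0, set g(h) := ‖h‖²/(2τ) + F(v + h), and assume the output-isolation condition: ‖u(w) − v‖ ≥ ρ for every w with ‖w − w̃‖ ≥ r, where ρ ≥ 2τ‖∇F(v)‖/(1 + τm). Then the infimum of g(u(w) − v) over all w ∈ ℝ^p equals the infimum of g(u(w) − v) over w in the open ball ‖w − w̃‖ < r; moreover g(u(w) − v) ≥ F(v) for every w with ‖w − w̃‖ ≥ r. -/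

import Mathlib

open scoped RealInnerProductSpace

/-- Theorem B.1 (sufficient condition for locality): under output isolation with a
sufficiently large isolation radius, the unconstrained increment problem and the
locally restricted one have the same optimal value, and far parameters are
energy-dominated by the origin. -/
theorem stmt_10 {p : ℕ} {H : Type*} [NormedAddCommGroup H] [InnerProductSpace ℝ H]
    [CompleteSpace H]
    (F : H → ℝ) (F' : H → H)
    (hF : ∀ x, HasGradientAt F (F' x) x)
    (m : ℝ) (hm : 0 < m)
    (hsc : ∀ x y, F x + ⟪F' x, y - x⟫ + (m / 2) * ‖y - x‖ ^ 2 ≤ F y)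
    (τ : ℝ) (hτ : 0 < τ)
    (u : EuclideanSpace ℝ (Fin p) → H)
    (wt : EuclideanSpace ℝ (Fin p))
    (r : ℝ) (hr : 0 < r)
    (ρ : ℝ) (hρ : 2 * τ * ‖F' (u wt)‖ / (1 + τ * m) ≤ ρ)
    (hiso : ∀ w, r ≤ ‖w - wt‖ → ρ ≤ ‖u w - u wt‖) :
    sInf (Set.range fun w =>
        ‖u w - u wt‖ ^ 2 / (2 * τ) + F (u wt + (u w - u wt))) =
      sInf ((fun w => ‖u w - u wt‖ ^ 2 / (2 * τ) + F (u wt + (u w - u wt))) ''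
        Metric.ball wt r) ∧
    ∀ w, r ≤ ‖w - wt‖ →
      F (u wt) ≤ ‖u w - u wt‖ ^ 2 / (2 * τ) + F (u wt + (u w - u wt)) := by
  set v := u wt with hv
  set g : EuclideanSpace ℝ (Fin p) → ℝ :=
    fun w => ‖u w - v‖ ^ 2 / (2 * τ) + F (v + (u w - v)) with hg
  have hden : 0 < 1 + τ * m := by positivity
  have hρ0 : 0 ≤ ρ := le_trans (by positivity) hρ
  -- strong convexity lower bound on F (v + h)
  have hkey : ∀ w : EuclideanSpace ℝ (Fin p),
      F v + ⟪F' v, u w - v⟫ + (m / 2) * ‖u w - v‖ ^ 2 ≤ F (v + (u w - v)) := by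
    intro w
    have := hsc v (v + (u w - v))
    simpa using this
  have hinner : ∀ w : EuclideanSpace ℝ (Fin p),
      -(‖F' v‖ * ‖u w - v‖) ≤ ⟪F' v, u w - v⟫ := by
    intro w
    have h1 := abs_real_inner_le_norm (F' v) (u w - v)
    have := (abs_le.mp h1).1
    linarith
  -- far bound
  have hfar : ∀ w, r ≤ ‖w - wt‖ → F v ≤ g w := by
    intro w hw
    have ht : ρ ≤ ‖u w - v‖ := hiso w hw
    have hk := hkey w
    have hi := hinner w
    have htn : (0:ℝ) ≤ ‖u w - v‖ := norm_nonneg _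
    have hb : (0:ℝ) ≤ ‖F' v‖ := norm_nonneg _
    have hmul : 2 * τ * ‖F' v‖ ≤ ρ * (1 + τ * m) :=
      (div_le_iff₀ hden).mp hρ
    have h2τ : (0:ℝ) < 2 * τ := by linarith
    have h1 : 2 * τ * ‖F' v‖ ≤ ‖u w - v‖ * (1 + τ * m) :=
      le_trans hmul (mul_le_mul_of_nonneg_right ht hden.le)
    have hkey2 : 2 * τ * ‖F' v‖ * ‖u w - v‖ ≤ ‖u w - v‖ ^ 2 * (1 + τ * m) := by
      nlinarith [mul_le_mul_of_nonneg_left h1 htn]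
    have hfrac : ‖u w - v‖ ^ 2 / (2 * τ) + (m / 2) * ‖u w - v‖ ^ 2
        = ‖u w - v‖ ^ 2 * (1 + τ * m) / (2 * τ) := by
      field_simp
    have hbt : ‖F' v‖ * ‖u w - v‖ ≤ ‖u w - v‖ ^ 2 * (1 + τ * m) / (2 * τ) := by
      rw [le_div_iff₀ h2τ]; nlinarith [hkey2]
    simp only [hg]
    linarith [hk, hi, hfrac, hbt]
  -- global lower bound
  have hlb : ∀ w, F v - ‖F' v‖ ^ 2 / (2 * m) ≤ g w := by
    intro w
    have hk := hkey w
    have hi := hinner w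
    have htn : (0:ℝ) ≤ ‖u w - v‖ := norm_nonneg _
    have hq : ‖F' v‖ * ‖u w - v‖ - (m / 2) * ‖u w - v‖ ^ 2 ≤ ‖F' v‖ ^ 2 / (2 * m) := by
      rw [le_div_iff₀ (by linarith : (0:ℝ) < 2 * m)]
      nlinarith [sq_nonneg (m * ‖u w - v‖ - ‖F' v‖)]
    have hpos : (0:ℝ) ≤ ‖u w - v‖ ^ 2 / (2 * τ) := by positivity
    simp only [hg]
    linarith [hk, hi, hq, hpos]
  have hSbdd : BddBelow (Set.range g) := by
    refine ⟨F v - ‖F' v‖ ^ 2 / (2 * m), ?_⟩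
    rintro x ⟨w, rfl⟩
    exact hlb w
  have hAsub : g '' Metric.ball wt r ⊆ Set.range g := by
    rintro x ⟨w, _, rfl⟩; exact ⟨w, rfl⟩
  have hAbdd : BddBelow (g '' Metric.ball wt r) := hSbdd.mono hAsub
  have hgwt : g wt = F v := by simp [hg, hv]
  have hFvA : F v ∈ g '' Metric.ball wt r :=
    ⟨wt, Metric.mem_ball_self hr, hgwt⟩
  have hAne : (g '' Metric.ball wt r).Nonempty := ⟨F v, hFvA⟩
  constructor
  · apply le_antisymm
    · exact csInf_le_csInf hSbdd hAne hAsub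
    · refine le_csInf ⟨g wt, ⟨wt, rfl⟩⟩ ?_
      rintro x ⟨w, rfl⟩
      by_cases hw : dist w wt < r
      · exact csInf_le hAbdd ⟨w, Metric.mem_ball.mpr hw, rfl⟩
      · have hw' : r ≤ ‖w - wt‖ := by
          rw [← dist_eq_norm]; exact le_of_not_gt hw
        exact le_trans (csInf_le hAbdd hFvA) (hfar w hw')
  · exact hfar
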